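/- Let θ be a root of t^3 + t^2 - 2t - 1. The only integer solutions (x, y) to x^2 + θxy + y^2 = ±1 with x, y ∈ ℤ (viewed in ℤ[θ]) satisfy xy = 0. -/

import Mathlib

theorem unit_norm_form_eq_pm_one (θ : ℝ) (hθ : θ ^ 3 + θ ^ 2 - 2 * θ - 1 = 0)
    (x y : ℤ)
    (h : (x : ℝ) ^ 2 + θ * x * y + y ^ 2 = 1 ∨ (x : ℝ) ^ 2 + θ * x * y + y ^ 2 = -1) :
    x * y = 0 := by
  by_contra hxy
  have hn : ((x * y : ℤ) : ℝ) ≠ 0 := by exact_mod_cast hxy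
  obtain ⟨c, hc⟩ : ∃ c : ℤ, θ * ((x * y : ℤ) : ℝ) = ((c - x ^ 2 - y ^ 2 : ℤ) : ℝ) := by
    rcases h with h | h
    · exact ⟨1, by push_cast at h ⊢; linarith⟩
    · exact ⟨-1, by push_cast at h ⊢; linarith⟩
  set q : ℚ := ((c - x ^ 2 - y ^ 2 : ℤ) : ℚ) / ((x * y : ℤ) : ℚ) with hq
  have hn' : ((x * y : ℤ) : ℚ) ≠ 0 := by exact_mod_cast hxy
  have hθq : θ = (q : ℝ) := by
    rw [hq]
    push_cast
    push_cast at hc hn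
    field_simp
    rw [eq_div_iff hn]; linarith [hc]
  have hq3 : q ^ 3 + q ^ 2 - 2 * q - 1 = 0 := by
    have : ((q ^ 3 + q ^ 2 - 2 * q - 1 : ℚ) : ℝ) = 0 := by
      push_cast
      rw [← hθq]
      linarith
    exact_mod_cast this
  set a := q.num with ha
  set b := (q.den : ℤ) with hb
  have hbq : (b : ℚ) ≠ 0 := by
    rw [hb]; exact_mod_cast q.den_ne_zero
  have hint : a ^ 3 + a ^ 2 * b - 2 * a * b ^ 2 - b ^ 3 = 0 := by
    have h1 : (a : ℚ) / (b : ℚ) = q := by exact_mod_cast q.num_div_den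
    have h2 : (a : ℚ) ^ 3 + a ^ 2 * b - 2 * a * b ^ 2 - b ^ 3 = 0 := by
      rw [← h1] at hq3
      field_simp at hq3
      have hb2 : (b : ℚ) ^ 3 ≠ 0 := pow_ne_zero _ hbq
      apply mul_left_cancel₀ hb2
      rw [mul_zero]
      linear_combination (b : ℚ) ^ 3 * hq3
    exact_mod_cast h2
  have hbdvd : b ∣ a ^ 3 := ⟨-(a ^ 2 - 2 * a * b - b ^ 2), by linear_combination hint⟩
  have hcop : IsCoprime b a := by
    rw [Int.isCoprime_iff_gcd_eq_one]
    have hred := q.reduced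
    simp only [ha, hb, Int.gcd, Int.natAbs_natCast]
    exact hred.symm
  have hbu : IsUnit b := by
    have hcop3 : IsCoprime b (a ^ 3) := hcop.pow_right
    obtain ⟨u, v, huv⟩ := hcop3
    have : b ∣ 1 := by
      rw [← huv]
      exact dvd_add (dvd_mul_left b u) (Dvd.dvd.mul_left hbdvd v)
    exact isUnit_of_dvd_one this
  have hb1 : b = 1 := by
    have hbpos : 0 < b := by rw [hb]; exact_mod_cast q.pos
    rcases Int.isUnit_iff.mp hbu with h1 | h1 <;> omega
  rw [hb1] at hint
  have hadvd : a * (a ^ 2 + a - 2) = 1 := by ring_nf; ring_nf at hint; linarith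
  have hau : IsUnit a := IsUnit.of_mul_eq_one _ hadvd
  rcases Int.isUnit_iff.mp hau with h1 | h1 <;> rw [h1] at hint <;> norm_num at hint
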